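/- Let q be a prime power with q ≥ r + 1, and M a constant rank r subspace of M_n(F_q) with 1 ≤ r < n and dim M = n + 1. Then summing (q^{r(u)} − 1) over all nonzero u ∈ F_q^n, where r(u) = dim {A ∈ M : Au = 0}, yields (q^{n+1} − 1)(q^{n−r} − 1); this leads to a contradiction, so no such M exists. -/

import Mathlib

/-- The linear map `A ↦ A.mulVec u` on matrices. -/
def mulVecRight (K : Type*) [Field K] (n : ℕ) (u : Fin n → K) :
    Matrix (Fin n) (Fin n) K →ₗ[K] (Fin n → K) where
  toFun A := A.mulVec u
  map_add' A B := Matrix.add_mulVec A B u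
  map_smul' c A := by simp [Matrix.smul_mulVec]

open Matrix Module Polynomial

lemma det_eq_zero_of_rows_mem {F : Type*} [Field F] {k : ℕ} (v : Fin k → (Fin k → F))
    (S : Submodule F (Fin k → F)) (hv : ∀ i, v i ∈ S)
    (hS : Module.finrank F S < k) : (Matrix.of v).det = 0 := by
  have hni : ¬ LinearIndependent F v := by
    intro h
    have h1 : finrank F (Submodule.span F (Set.range v)) = k := by
      simpa using finrank_span_eq_card h
    have h2 : Submodule.span F (Set.range v) ≤ S := by
      rw [Submodule.span_le]; rintro _ ⟨i, rfl⟩; exact hv i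
    have := Submodule.finrank_mono (R := F) h2
    omega
  rw [Fintype.not_linearIndependent_iff] at hni
  obtain ⟨g, hg, i, hi⟩ := hni
  rw [← Matrix.exists_vecMul_eq_zero_iff]
  refine ⟨g, ?_, ?_⟩
  · intro h; exact hi (congrFun h i)
  · ext j
    have := congrFun hg j
    simpa [Matrix.vecMul, dotProduct, Finset.sum_apply] using this

lemma lemL {q n r : ℕ} {F : Type*} [Field F] [Fintype F] [DecidableEq F]
    (hF : Fintype.card F = q) (hqr : r + 1 ≤ q) (hr1 : 1 ≤ r)
    (A B : Matrix (Fin n) (Fin n) F) (hA : A.rank = r) (hB : B.rank ≤ r)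
    (hP : ∀ t : F, (A + t • B).rank ≤ r) (u : Fin n → F) (hu : A.mulVec u = 0) :
    B.mulVec u ∈ LinearMap.range A.mulVecLin := by
  by_contra hBu
  set V := LinearMap.range A.mulVecLin with hV
  have hft : finrank F V = r := hA
  let bV : Basis (Fin r) F V := (Module.finBasis F V).reindex (finCongr hft)
  have hx : ∀ i : Fin r, ∃ z : Fin n → F, A.mulVec z = (bV i : Fin n → F) := by
    intro i
    obtain ⟨z, hz⟩ := (bV i).2
    exact ⟨z, by simpa using hz⟩
  choose x hxs using hx
  set w : Fin (r + 1) → (Fin n → F) :=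
    Fin.snoc (fun i => A.mulVec (x i)) (B.mulVec u) with hw
  have hwind : LinearIndependent F w := by
    rw [hw, linearIndependent_fin_snoc]
    have hcoe : (fun i => A.mulVec (x i)) = fun i : Fin r => ((bV i : V) : Fin n → F) := by
      funext i; exact hxs i
    constructor
    · rw [hcoe]
      exact bV.linearIndependent.map' V.subtype (Submodule.ker_subtype V)
    · rw [hcoe]
      have : Submodule.span F (Set.range fun i : Fin r => ((bV i : V) : Fin n → F)) = V := by
        have : (Set.range fun i : Fin r => ((bV i : V) : Fin n → F))
            = V.subtype '' (Set.range bV) := by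
          ext y; simp [Set.range_comp]
        rw [this, Submodule.span_image, bV.span_eq, Submodule.map_top,
          Submodule.range_subtype]
      rw [this]; exact hBu
  set Wsub := Submodule.span F (Set.range w) with hWsub
  let bW : Basis (Fin (r + 1)) F Wsub := Basis.span hwind
  obtain ⟨W', hcompl⟩ := Submodule.exists_isCompl Wsub
  let π : (Fin n → F) →ₗ[F] (Fin (r + 1) → F) :=
    (bW.equivFun : Wsub ≃ₗ[F] (Fin (r + 1) → F)).toLinearMap ∘ₗ
      (Submodule.linearProjOfIsCompl Wsub W' hcompl)
  have hπw : ∀ j, π (w j) = Pi.single j 1 := by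
    intro j
    have hmem : w j ∈ Wsub := Submodule.subset_span ⟨j, rfl⟩
    have h1 : (Submodule.linearProjOfIsCompl Wsub W' hcompl) (w j) = ⟨w j, hmem⟩ := by
      exact Submodule.linearProjOfIsCompl_apply_left hcompl ⟨w j, hmem⟩
    have h2 : (⟨w j, hmem⟩ : Wsub) = bW j := by
      apply Subtype.ext
      exact congrArg Subtype.val (Basis.span_apply hwind j).symm
    simp only [π, LinearMap.comp_apply, h1, h2, LinearEquiv.coe_toLinearMap]
    ext i
    rw [Basis.equivFun_self]
    simp [Pi.single_apply, eq_comm]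
  set a : Fin (r + 1) → (Fin (r + 1) → F) := fun j => π (w j) with ha
  set b : Fin (r + 1) → (Fin (r + 1) → F) :=
    Fin.snoc (fun j : Fin r => π (B.mulVec (x j))) 0 with hb
  set d : Finset (Fin (r + 1)) → F := fun T => (Matrix.of (T.piecewise b a)).det with hd
  set P : Polynomial F := ∑ T : Finset (Fin (r + 1)), Polynomial.C (d T) * X ^ T.card with hPdef
  have heval : ∀ t : F, P.eval t = (Matrix.of (fun j => a j + t • b j)).det := by
    intro t
    have e1 : (Matrix.of (fun j => a j + t • b j)).det
        = Matrix.detRowAlternating.toMultilinearMap ((fun j => t • b j) + a) := by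
      congr 1
      funext j
      exact (add_comm _ _)
    rw [e1, MultilinearMap.map_add_univ]
    rw [hPdef, Polynomial.eval_finset_sum]
    apply Finset.sum_congr rfl
    intro T _
    have e3 : (T.piecewise (fun j => t • b j) a)
        = fun i => (if i ∈ T then t else 1) • (T.piecewise b a) i := by
      funext i
      by_cases h : i ∈ T
      · simp [Finset.piecewise_eq_of_mem _ _ _ h, h]
      · simp [Finset.piecewise_eq_of_notMem _ _ _ h, h]
    rw [e3, MultilinearMap.map_smul_univ]
    have e4 : (∏ i : Fin (r+1), (if i ∈ T then t else 1)) = t ^ T.card := by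
      rw [Finset.prod_ite_mem Finset.univ T (fun _ => t), Finset.univ_inter,
        Finset.prod_const]
    rw [e4]
    have e5 : Matrix.detRowAlternating.toMultilinearMap (T.piecewise b a) = d T := rfl
    rw [e5, smul_eq_mul, mul_comm, Polynomial.eval_mul, Polynomial.eval_C,
      Polynomial.eval_pow, Polynomial.eval_X, mul_comm]
  have haj : ∀ j, a j = Pi.single j 1 := hπw
  have hP0 : P.eval 0 = 1 := by
    rw [heval 0]
    have e : (Matrix.of (fun j => a j + (0:F) • b j)) = (1 : Matrix (Fin (r+1)) (Fin (r+1)) F) := by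
      ext j i
      rw [Matrix.of_apply]
      simp only [zero_smul, add_zero, haj j]
      rw [Matrix.one_apply, Pi.single_apply]
      simp [eq_comm]
    rw [e, Matrix.det_one]
  have hblast : b (Fin.last r) = 0 := by
    rw [hb]; exact Fin.snoc_last _ _
  have hbcast : ∀ i : Fin r, b (Fin.castSucc i) = π (B.mulVec (x i)) := by
    intro i; rw [hb]; exact Fin.snoc_castSucc _ _ _
  have hwlast : w (Fin.last r) = B.mulVec u := by
    rw [hw]; exact Fin.snoc_last _ _
  have hwcast : ∀ i : Fin r, w (Fin.castSucc i) = A.mulVec (x i) := by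
    intro i; rw [hw]; exact Fin.snoc_castSucc _ _ _
  have hrankB : finrank F (Submodule.map π (LinearMap.range B.mulVecLin)) < r + 1 := by
    have h1 := Submodule.finrank_map_le π (LinearMap.range B.mulVecLin)
    have h2 : finrank F (LinearMap.range B.mulVecLin) = B.rank := rfl
    omega
  have hPt : ∀ t : F, t ≠ 0 → P.eval t = 0 := by
    intro t ht
    rw [heval t]
    apply det_eq_zero_of_rows_mem _ (Submodule.map π (LinearMap.range (A + t • B).mulVecLin))
    · intro j
      refine Fin.lastCases ?_ ?_ j
      · have h1 : a (Fin.last r) + t • b (Fin.last r) = π (B.mulVec u) := by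
          rw [hblast, smul_zero, add_zero]
          show π (w (Fin.last r)) = _
          rw [hwlast]
        rw [h1]
        refine Submodule.mem_map_of_mem ⟨t⁻¹ • u, ?_⟩
        rw [Matrix.mulVecLin_apply, Matrix.mulVec_smul, Matrix.add_mulVec, hu, zero_add,
          Matrix.smul_mulVec, smul_smul, inv_mul_cancel₀ ht, one_smul]
      · intro i
        have h1 : a (Fin.castSucc i) + t • b (Fin.castSucc i)
            = π ((A + t • B).mulVec (x i)) := by
          have ha' : a (Fin.castSucc i) = π (A.mulVec (x i)) := by
            show π (w (Fin.castSucc i)) = _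
            rw [hwcast]
          rw [ha', hbcast, ← LinearMap.map_smul, ← LinearMap.map_add]
          congr 1
          rw [Matrix.add_mulVec, Matrix.smul_mulVec]
        rw [h1]
        exact Submodule.mem_map_of_mem ⟨x i, Matrix.mulVecLin_apply _ _⟩
    · have h1 := Submodule.finrank_map_le π (LinearMap.range (A + t • B).mulVecLin)
      have h2 : finrank F (LinearMap.range (A + t • B).mulVecLin) = (A + t • B).rank := rfl
      have h3 := hP t
      omega
  have hdT : ∀ T : Finset (Fin (r+1)), d T ≠ 0 → T.card ≤ r - 1 := by
    intro T hT
    by_contra hcard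
    push_neg at hcard
    have hlast : Fin.last r ∉ T := by
      intro hmem
      apply hT
      apply Matrix.det_eq_zero_of_row_eq_zero (Fin.last r)
      intro j
      rw [Matrix.of_apply, Finset.piecewise_eq_of_mem _ _ _ hmem, hblast]
      rfl
    have hsub : T ⊆ Finset.univ.erase (Fin.last r) := fun i hi =>
      Finset.mem_erase.mpr ⟨by rintro rfl; exact hlast hi, Finset.mem_univ _⟩
    have hcard2 : (Finset.univ.erase (Fin.last r)).card = r := by
      rw [Finset.card_erase_of_mem (Finset.mem_univ _), Finset.card_univ, Fintype.card_fin]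
      omega
    have hTeq : T = Finset.univ.erase (Fin.last r) :=
      Finset.eq_of_subset_of_card_le hsub (by omega)
    apply hT
    apply det_eq_zero_of_rows_mem _ (Submodule.map π (LinearMap.range B.mulVecLin))
    · intro j
      refine Fin.lastCases ?_ ?_ j
      · have h1 : T.piecewise b a (Fin.last r) = π (B.mulVec u) := by
          rw [Finset.piecewise_eq_of_notMem _ _ _ hlast]
          show π (w (Fin.last r)) = _
          rw [hwlast]
        rw [h1]
        exact Submodule.mem_map_of_mem ⟨u, Matrix.mulVecLin_apply _ _⟩
      · intro i
        have hmem : Fin.castSucc i ∈ T := by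
          rw [hTeq]
          exact Finset.mem_erase.mpr ⟨(Fin.castSucc_lt_last i).ne, Finset.mem_univ _⟩
        rw [Finset.piecewise_eq_of_mem _ _ _ hmem, hbcast]
        exact Submodule.mem_map_of_mem ⟨x i, Matrix.mulVecLin_apply _ _⟩
    · exact hrankB
  have hdeg : P.natDegree ≤ r - 1 := by
    rw [hPdef]
    apply Polynomial.natDegree_sum_le_of_forall_le
    intro T _
    by_cases h : d T = 0
    · simp [h]
    · exact le_trans (Polynomial.natDegree_C_mul_X_pow_le _ _) (hdT T h)
  have hPne : P ≠ 0 := by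
    intro h
    rw [h] at hP0
    simp at hP0
  have hroots : (Finset.univ.erase (0:F)) ⊆ P.roots.toFinset := by
    intro t ht
    rw [Multiset.mem_toFinset, Polynomial.mem_roots hPne]
    exact hPt t (Finset.ne_of_mem_erase ht)
  have hc1 : (Finset.univ.erase (0:F)).card = q - 1 := by
    rw [Finset.card_erase_of_mem (Finset.mem_univ _), Finset.card_univ, hF]
  have hc2 := Finset.card_le_card hroots
  have hc3 := Multiset.toFinset_card_le P.roots
  have hc4 := Polynomial.card_roots' P
  omega

lemma mulVecRight_apply (K : Type*) [Field K] (n : ℕ) (u : Fin n → K)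
    (A : Matrix (Fin n) (Fin n) K) : mulVecRight K n u A = A.mulVec u := rfl

lemma rank_bound {q n r : ℕ} {F : Type*} [Field F] [Fintype F] [DecidableEq F]
    (hF : Fintype.card F = q) (hqr : r + 1 ≤ q) (hr1 : 1 ≤ r)
    (M : Submodule F (Matrix (Fin n) (Fin n) F))
    (hconst : ∀ A ∈ M, A ≠ 0 → Matrix.rank A = r)
    (hdim : Module.finrank F M = n + 1) (u : Fin n → F) :
    n + 1 - r ≤ Module.finrank F ↥(M ⊓ LinearMap.ker (mulVecRight F n u)) := by
  set ev := (mulVecRight F n u).domRestrict M with hev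
  have hrn : Module.finrank F (LinearMap.range ev) + Module.finrank F (LinearMap.ker ev)
      = n + 1 := by
    rw [← hdim]; exact LinearMap.finrank_range_add_finrank_ker ev
  have hkerfin : Module.finrank F ↥(M ⊓ LinearMap.ker (mulVecRight F n u))
      = Module.finrank F (LinearMap.ker ev) := by
    rw [hev, LinearMap.ker_domRestrict, ← Submodule.map_comap_subtype]
    exact (LinearEquiv.finrank_eq (Submodule.equivMapOfInjective M.subtype
      (Submodule.injective_subtype M) _)).symm
  have hrange_le_n : Module.finrank F (LinearMap.range ev) ≤ n := by
    have h1 := Submodule.finrank_le (LinearMap.range ev)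
    rwa [Module.finrank_pi, Fintype.card_fin] at h1
  have hker_pos : LinearMap.ker ev ≠ ⊥ := by
    intro hbot
    rw [hbot, finrank_bot] at hrn
    omega
  obtain ⟨Asub, hAk, hAne⟩ := Submodule.exists_mem_ne_zero_of_ne_bot hker_pos
  set A : Matrix (Fin n) (Fin n) F := (Asub : Matrix (Fin n) (Fin n) F) with hAdef
  have hAM : A ∈ M := Asub.2
  have hA0 : A ≠ 0 := by
    intro h
    apply hAne
    exact Subtype.ext h
  have hAu : A.mulVec u = 0 := by
    have h1 : ev Asub = 0 := LinearMap.mem_ker.mp hAk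
    rw [hev, LinearMap.domRestrict_apply, mulVecRight_apply] at h1
    exact h1
  have hrank_le : ∀ B ∈ M, Matrix.rank B ≤ r := by
    intro B hB
    by_cases h : B = 0
    · rw [h, Matrix.rank_zero]; omega
    · exact le_of_eq (hconst B hB h)
  have hrange : LinearMap.range ev ≤ LinearMap.range A.mulVecLin := by
    rintro y ⟨Bsub, rfl⟩
    have hBM : (Bsub : Matrix (Fin n) (Fin n) F) ∈ M := Bsub.2
    have h2 : ev Bsub = (Bsub : Matrix (Fin n) (Fin n) F).mulVec u := rfl
    rw [h2]
    refine lemL hF hqr hr1 A _ (hconst A hAM hA0) (hrank_le _ hBM) ?_ u hAu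
    intro t
    exact hrank_le _ (M.add_mem hAM (M.smul_mem t hBM))
  have hle : Module.finrank F (LinearMap.range ev)
      ≤ Module.finrank F (LinearMap.range A.mulVecLin) :=
    Submodule.finrank_mono hrange
  have hr : Module.finrank F (LinearMap.range A.mulVecLin) = r := hconst A hAM hA0
  omega

set_option maxHeartbeats 1000000 in
/-- Let q be a prime power with q ≥ r + 1, and M a constant rank r
subspace of M_n(F_q) with 1 ≤ r < n and dim M = n + 1. Then summing (q^{r(u)} − 1)
over all nonzero u, where r(u) = dim {A ∈ M : Au = 0}, yields
(q^{n+1} − 1)(q^{n−r} − 1); this leads to a contradiction, so no such M exists. -/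
theorem stmt16 (q n r : ℕ) (hq : IsPrimePow q)
    (F : Type*) [Field F] [Fintype F] [DecidableEq F] (hF : Fintype.card F = q)
    (hr1 : 1 ≤ r) (hrn : r < n) (hqr : r + 1 ≤ q)
    (M : Submodule F (Matrix (Fin n) (Fin n) F)) (hM : M ≠ ⊥)
    (hconst : ∀ A ∈ M, A ≠ 0 → Matrix.rank A = r)
    (hdim : Module.finrank F M = n + 1) :
    (∑ u ∈ Finset.univ.filter (fun u : Fin n → F => u ≠ 0),
        (q ^ (Module.finrank F ↥(M ⊓ LinearMap.ker (mulVecRight F n u))) - 1) =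
      (q ^ (n + 1) - 1) * (q ^ (n - r) - 1)) ∧ False := by
  classical
  have hq2 : 2 ≤ q := by omega
  have hcardK : ∀ u : Fin n → F,
      (Finset.univ.filter (fun A : Matrix (Fin n) (Fin n) F => A ∈ M ∧ A.mulVec u = 0)).card
        = q ^ (Module.finrank F ↥(M ⊓ LinearMap.ker (mulVecRight F n u))) := by
    intro u
    have h1 : Fintype.card ↥(M ⊓ LinearMap.ker (mulVecRight F n u))
        = q ^ (Module.finrank F ↥(M ⊓ LinearMap.ker (mulVecRight F n u))) := by
      rw [← hF]
      exact card_eq_pow_finrank (K := F)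
    rw [← h1]
    exact (Fintype.card_of_subtype _ (fun A => by
      simp [Submodule.mem_inf, LinearMap.mem_ker, mulVecRight_apply])).symm
  have hzero_mem : ∀ u : Fin n → F, (0 : Matrix (Fin n) (Fin n) F) ∈
      Finset.univ.filter (fun A : Matrix (Fin n) (Fin n) F => A ∈ M ∧ A.mulVec u = 0) := by
    intro u; simp [M.zero_mem, Matrix.zero_mulVec]
  have hcardK' : ∀ u : Fin n → F,
      (Finset.univ.filter
        (fun A : Matrix (Fin n) (Fin n) F => A ∈ M ∧ A ≠ 0 ∧ A.mulVec u = 0)).card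
        = q ^ (Module.finrank F ↥(M ⊓ LinearMap.ker (mulVecRight F n u))) - 1 := by
    intro u
    have e : Finset.univ.filter
          (fun A : Matrix (Fin n) (Fin n) F => A ∈ M ∧ A ≠ 0 ∧ A.mulVec u = 0)
        = (Finset.univ.filter
            (fun A : Matrix (Fin n) (Fin n) F => A ∈ M ∧ A.mulVec u = 0)).erase 0 := by
      ext A
      simp only [Finset.mem_erase, Finset.mem_filter, Finset.mem_univ, true_and]
      tauto
    rw [e, Finset.card_erase_of_mem (hzero_mem u), hcardK u]
  have hcardM : (Finset.univ.filter (fun A : Matrix (Fin n) (Fin n) F => A ∈ M)).card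
      = q ^ (n + 1) := by
    have h1 : Fintype.card ↥M = q ^ (n + 1) := by
      rw [← hF, ← hdim]; exact card_eq_pow_finrank (K := F)
    rw [← h1]
    exact (Fintype.card_of_subtype _ (fun A => by simp)).symm
  have hcardN0 : (Finset.univ.filter
      (fun A : Matrix (Fin n) (Fin n) F => A ∈ M ∧ A ≠ 0)).card = q ^ (n + 1) - 1 := by
    have e : Finset.univ.filter (fun A : Matrix (Fin n) (Fin n) F => A ∈ M ∧ A ≠ 0)
        = (Finset.univ.filter (fun A : Matrix (Fin n) (Fin n) F => A ∈ M)).erase 0 := by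
      ext A; simp only [Finset.mem_erase, Finset.mem_filter, Finset.mem_univ, true_and]; tauto
    rw [e, Finset.card_erase_of_mem (by simp [M.zero_mem]), hcardM]
  have hcardker : ∀ A ∈ M, A ≠ 0 →
      (Finset.univ.filter (fun v : Fin n → F => v ≠ 0 ∧ A.mulVec v = 0)).card
        = q ^ (n - r) - 1 := by
    intro A hAM hA0
    have hrk : Module.finrank F (LinearMap.range A.mulVecLin) = r := hconst A hAM hA0
    have hrn2 : Module.finrank F (LinearMap.range A.mulVecLin)
        + Module.finrank F (LinearMap.ker A.mulVecLin) = n := by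
      rw [LinearMap.finrank_range_add_finrank_ker A.mulVecLin, Module.finrank_pi,
        Fintype.card_fin]
    have hker : Module.finrank F (LinearMap.ker A.mulVecLin) = n - r := by omega
    have h1 : Fintype.card ↥(LinearMap.ker A.mulVecLin) = q ^ (n - r) := by
      rw [← hF, ← hker]; exact card_eq_pow_finrank (K := F)
    have h2 : (Finset.univ.filter (fun v : Fin n → F => A.mulVec v = 0)).card
        = q ^ (n - r) := by
      rw [← h1]
      exact (Fintype.card_of_subtype _ (fun v => by simp [LinearMap.mem_ker])).symm
    have e : Finset.univ.filter (fun v : Fin n → F => v ≠ 0 ∧ A.mulVec v = 0)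
        = (Finset.univ.filter (fun v : Fin n → F => A.mulVec v = 0)).erase 0 := by
      ext v
      simp only [Finset.mem_erase, Finset.mem_filter, Finset.mem_univ, true_and]
      try tauto
    rw [e, Finset.card_erase_of_mem (by simp [Matrix.mulVec_zero]), h2]
  have swap : ∑ u ∈ Finset.univ.filter (fun u : Fin n → F => u ≠ 0),
      (Finset.univ.filter
        (fun A : Matrix (Fin n) (Fin n) F => A ∈ M ∧ A ≠ 0 ∧ A.mulVec u = 0)).card
      = ∑ A ∈ Finset.univ.filter (fun A : Matrix (Fin n) (Fin n) F => A ∈ M ∧ A ≠ 0),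
          (Finset.univ.filter (fun v : Fin n → F => v ≠ 0 ∧ A.mulVec v = 0)).card := by
    simp_rw [Finset.card_filter]
    rw [Finset.sum_comm]
    conv_rhs => rw [Finset.sum_filter]
    apply Finset.sum_congr rfl
    intro A _
    rw [Finset.sum_filter]
    by_cases hA : A ∈ M ∧ A ≠ 0
    · rw [if_pos hA]
      apply Finset.sum_congr rfl
      intro u _
      by_cases hu : u = 0
      · simp [hu]
      · by_cases hz : A.mulVec u = 0
        · simp only [if_pos (show A ∈ M ∧ A ≠ 0 ∧ A.mulVec u = 0 from ⟨hA.1, hA.2, hz⟩),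
            if_pos (show u ≠ 0 ∧ A.mulVec u = 0 from ⟨hu, hz⟩), if_pos hu]
        · simp only [if_neg (show ¬(A ∈ M ∧ A ≠ 0 ∧ A.mulVec u = 0) from fun h => hz h.2.2),
            if_neg (show ¬(u ≠ 0 ∧ A.mulVec u = 0) from fun h => hz h.2), ite_self]
    · rw [if_neg hA]
      apply Finset.sum_eq_zero
      intro u _
      by_cases hu : u = 0
      · simp [hu]
      · have hn : ¬(A ∈ M ∧ A ≠ 0 ∧ A.mulVec u = 0) := by tauto
        simp [hu, hn]
  have identity : ∑ u ∈ Finset.univ.filter (fun u : Fin n → F => u ≠ 0),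
      (q ^ (Module.finrank F ↥(M ⊓ LinearMap.ker (mulVecRight F n u))) - 1)
      = (q ^ (n + 1) - 1) * (q ^ (n - r) - 1) := by
    calc ∑ u ∈ Finset.univ.filter (fun u : Fin n → F => u ≠ 0),
        (q ^ (Module.finrank F ↥(M ⊓ LinearMap.ker (mulVecRight F n u))) - 1)
        = ∑ u ∈ Finset.univ.filter (fun u : Fin n → F => u ≠ 0),
          (Finset.univ.filter
            (fun A : Matrix (Fin n) (Fin n) F => A ∈ M ∧ A ≠ 0 ∧ A.mulVec u = 0)).card :=
          Finset.sum_congr rfl (fun u _ => (hcardK' u).symm)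
      _ = ∑ A ∈ Finset.univ.filter (fun A : Matrix (Fin n) (Fin n) F => A ∈ M ∧ A ≠ 0),
          (Finset.univ.filter (fun v : Fin n → F => v ≠ 0 ∧ A.mulVec v = 0)).card := swap
      _ = ∑ A ∈ Finset.univ.filter (fun A : Matrix (Fin n) (Fin n) F => A ∈ M ∧ A ≠ 0),
          (q ^ (n - r) - 1) := Finset.sum_congr rfl (fun A hA => by
            rw [Finset.mem_filter] at hA
            exact hcardker A hA.2.1 hA.2.2)
      _ = (q ^ (n + 1) - 1) * (q ^ (n - r) - 1) := by
          rw [Finset.sum_const, smul_eq_mul, hcardN0]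
  refine ⟨identity, ?_⟩
  have hbound : ∀ u : Fin n → F,
      q ^ (n + 1 - r) - 1
        ≤ q ^ (Module.finrank F ↥(M ⊓ LinearMap.ker (mulVecRight F n u))) - 1 := by
    intro u
    have h1 := rank_bound hF hqr hr1 M hconst hdim u
    have h2 : q ^ (n + 1 - r)
        ≤ q ^ (Module.finrank F ↥(M ⊓ LinearMap.ker (mulVecRight F n u))) :=
      Nat.pow_le_pow_right (by omega) h1
    omega
  have hcardU0 : (Finset.univ.filter (fun u : Fin n → F => u ≠ 0)).card = q ^ n - 1 := by
    rw [Finset.filter_ne' Finset.univ (0 : Fin n → F),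
      Finset.card_erase_of_mem (Finset.mem_univ _), Finset.card_univ, Fintype.card_fun,
      hF, Fintype.card_fin]
  have hlow : (q ^ n - 1) * (q ^ (n + 1 - r) - 1)
      ≤ (q ^ (n + 1) - 1) * (q ^ (n - r) - 1) := by
    calc (q ^ n - 1) * (q ^ (n + 1 - r) - 1)
        = ∑ _u ∈ Finset.univ.filter (fun u : Fin n → F => u ≠ 0), (q ^ (n + 1 - r) - 1) := by
          rw [Finset.sum_const, smul_eq_mul, hcardU0]
      _ ≤ ∑ u ∈ Finset.univ.filter (fun u : Fin n → F => u ≠ 0),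
            (q ^ (Module.finrank F ↥(M ⊓ LinearMap.ker (mulVecRight F n u))) - 1) :=
          Finset.sum_le_sum (fun u _ => hbound u)
      _ = (q ^ (n + 1) - 1) * (q ^ (n - r) - 1) := identity
  have hb2 : 2 ≤ q ^ (n - r) := le_trans hq2 (Nat.le_self_pow (by omega) q)
  have hc2 : 2 ≤ q ^ r := le_trans hq2 (Nat.le_self_pow (by omega) q)
  have e1 : q ^ n = q ^ (n - r) * q ^ r := by rw [← pow_add]; congr 1; omega
  have e2 : q ^ (n + 1 - r) = q ^ (n - r) * q := by rw [← pow_succ]; congr 1; omega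
  have e3 : q ^ (n + 1) = q ^ (n - r) * q ^ r * q := by
    rw [← pow_add, ← pow_succ]; congr 1; omega
  rw [e1, e2, e3] at hlow
  set b := q ^ (n - r) with hbdef
  set c := q ^ r with hcdef
  have h1b : 1 ≤ b * c := Nat.one_le_iff_ne_zero.mpr (Nat.mul_ne_zero (by omega) (by omega))
  have h2b : 1 ≤ b * q := Nat.one_le_iff_ne_zero.mpr (Nat.mul_ne_zero (by omega) (by omega))
  have h3b : 1 ≤ b * c * q := Nat.one_le_iff_ne_zero.mpr (Nat.mul_ne_zero
    (Nat.mul_ne_zero (by omega) (by omega)) (by omega))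
  have h4b : 1 ≤ b := by omega
  zify [h1b, h2b, h3b, h4b] at hlow
  have hq2' : (2 : ℤ) ≤ (q : ℤ) := by exact_mod_cast hq2
  have hb2' : (2 : ℤ) ≤ (b : ℤ) := by exact_mod_cast hb2
  have hc2' : (2 : ℤ) ≤ (c : ℤ) := by exact_mod_cast hc2
  nlinarith [mul_pos (mul_pos (show (0:ℤ) < b by linarith)
    (show (0:ℤ) < c - 1 by linarith)) (show (0:ℤ) < (q : ℤ) - 1 by linarith)]
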